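/- Let G be a directed graph containing a source and a target, and let ω ∪ τ = [n] be a source-target decomposition (ω contains a source of G, τ contains a target of G, G|_ω is a directed acyclic graph, and there are no edges from τ to ω). If v ∈ τ is a source of G|_τ (receives no edges from within τ), then (ω ∪ {v}) ∪ (τ \ {v}) is again a source-target decomposition of G. -/
import Mathlib


open Finset

/-- A source is a node with no incoming edges (`G a b` means edge `a → b`). -/
def isSource {n : ℕ} (G : Fin n → Fin n → Prop) (s : Fin n) : Prop :=
  ∀ j, j ≠ s → ¬ G j s

/-- A target is a node receiving an edge from every other node. -/
def isTarget {n : ℕ} (G : Fin n → Fin n → Prop) (t : Fin n) : Prop :=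
  ∀ j, j ≠ t → G j t

/-- The induced subgraph of `G` on `ω` is a DAG: there is an ordering of the
vertices such that every edge within `ω` goes strictly forward. -/
def isDAGOn {n : ℕ} (G : Fin n → Fin n → Prop) (ω : Finset (Fin n)) : Prop :=
  ∃ f : Fin n → ℕ, ∀ i ∈ ω, ∀ j ∈ ω, G i j → f i < f j

/-- A source-target decomposition of `G`: a partition `ω ⊔ τ = [n]` such that `ω`
contains a source of `G`, `τ` contains a target of `G`, `G|_ω` is a DAG, and there
are no edges from `τ` to `ω`. -/
def isSTDecomp {n : ℕ} (G : Fin n → Fin n → Prop) (ω τ : Finset (Fin n)) : Prop :=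
  ω ∪ τ = Finset.univ ∧ Disjoint ω τ ∧
  (∃ s ∈ ω, isSource G s) ∧ (∃ t ∈ τ, isTarget G t) ∧
  isDAGOn G ω ∧ (∀ i ∈ τ, ∀ j ∈ ω, ¬ G i j)

theorem stmt_13 {n : ℕ} (G : Fin n → Fin n → Prop)
    (hirr : ∀ i, ¬ G i i)
    (ω τ : Finset (Fin n)) (hdec : isSTDecomp G ω τ)
    (hτ : 2 ≤ τ.card)
    (v : Fin n) (hv : v ∈ τ)
    -- `v` is a source of `G|_τ`: it receives no edges from within `τ`
    (hsrc : ∀ i ∈ τ, i ≠ v → ¬ G i v) :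
    isSTDecomp G (insert v ω) (τ.erase v) := by
  obtain ⟨hunion, hdisj, ⟨s, hs, hsS⟩, ⟨t, ht, htT⟩, ⟨f, hf⟩, hnoedge⟩ := hdec
  have hvω : v ∉ ω := fun h => (Finset.disjoint_left.mp hdisj h) hv
  -- t ≠ v
  obtain ⟨u, hu, huv⟩ : ∃ u ∈ τ, u ≠ v := by
    obtain ⟨u, hu, hu2⟩ := Finset.one_lt_card.mp hτ
    obtain ⟨w, hw, hw2⟩ := hu2
    by_cases h : u = v
    · exact ⟨w, hw, fun e => hw2 (e.trans h.symm).symm⟩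
    · exact ⟨u, hu, h⟩
  have htv : t ≠ v := by
    intro e
    subst e
    exact hsrc u hu huv (htT u huv)
  refine ⟨?_, ?_, ⟨s, Finset.mem_insert_of_mem hs, hsS⟩,
    ⟨t, Finset.mem_erase.mpr ⟨htv, ht⟩, htT⟩, ?_, ?_⟩
  · ext x
    simp only [Finset.mem_union, Finset.mem_insert, Finset.mem_erase, Finset.mem_univ, iff_true]
    by_cases h : x = v
    · exact Or.inl (Or.inl h)
    · rcases Finset.mem_union.mp (hunion ▸ Finset.mem_univ x) with h' | h'
      · exact Or.inl (Or.inr h')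
      · exact Or.inr ⟨h, h'⟩
  · rw [Finset.disjoint_left]
    intro a ha ha'
    obtain ⟨hav, haτ⟩ := Finset.mem_erase.mp ha'
    rcases Finset.mem_insert.mp ha with h | h
    · exact hav h
    · exact (Finset.disjoint_left.mp hdisj h) haτ
  · refine ⟨fun i => if i = v then (Finset.univ.sup f) + 1 else f i, ?_⟩
    intro i hi j hj hij
    by_cases hjv : j = v
    · have hiv : i ≠ v := fun e => hirr v (by rw [e, hjv] at hij; exact hij)
      have hiω : i ∈ ω := (Finset.mem_insert.mp hi).resolve_left hiv
      simp only [hjv, if_pos rfl, hiv, if_neg]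
      exact Nat.lt_succ_of_le (Finset.le_sup (Finset.mem_univ i))
    · have hjω : j ∈ ω := (Finset.mem_insert.mp hj).resolve_left hjv
      by_cases hiv : i = v
      · exact absurd hij (hnoedge i (hiv ▸ hv) j hjω)
      · have hiω : i ∈ ω := (Finset.mem_insert.mp hi).resolve_left hiv
        simp only [hiv, hjv, if_neg, if_neg]
        exact hf i hiω j hjω hij
  · intro i hi j hj
    obtain ⟨hiv, hiτ⟩ := Finset.mem_erase.mp hi
    rcases Finset.mem_insert.mp hj with h | h
    · exact h ▸ hsrc i hiτ hiv
    · exact hnoedge i hiτ j h
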